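/- Let S be a multiplicative subset of an integral domain R and let I be a nonzero ideal of R that is 2-v-generated, i.e., there exist a, b ∈ I with (R : I) = (R : aR + bR). Then the ideal I R_S of R_S is 2-v-generated. -/

import Mathlib

/-- `(A : J) = {x ∈ Frac A : x J ⊆ A}`, as an `A`-submodule of the fraction field. -/
noncomputable def idealInv {A : Type*} [CommRing A] (J : Ideal A) :
    Submodule A (FractionRing A) :=
  1 / Submodule.map (Algebra.linearMap A (FractionRing A)) J

/-- A nonzero ideal `I` is `2`-`v`-generated if it contains elements `a, b` with
`(A : I) = (A : aA + bA)`. -/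
noncomputable def TwoVGenerated {A : Type*} [CommRing A] (I : Ideal A) : Prop :=
  ∃ a b, a ∈ I ∧ b ∈ I ∧ idealInv I = idealInv (Ideal.span {a, b})

lemma mem_idealInv_iff {A : Type*} [CommRing A] (J : Ideal A) (x : FractionRing A) :
    x ∈ idealInv J ↔ ∀ j ∈ J, x * algebraMap A (FractionRing A) j ∈
      (1 : Submodule A (FractionRing A)) := by
  rw [idealInv, Submodule.mem_div_iff_forall_mul_mem]
  constructor
  · intro h j hj
    exact h _ ⟨j, hj, rfl⟩
  · rintro h y ⟨j, hj, rfl⟩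
    exact h j hj

lemma div_mul_mem_one_iff {A : Type*} [CommRing A] [IsDomain A] {r t c : A} (ht : t ≠ 0) :
    (algebraMap A (FractionRing A) r / algebraMap A (FractionRing A) t) *
      algebraMap A (FractionRing A) c ∈ (1 : Submodule A (FractionRing A)) ↔ t ∣ r * c := by
  have hinj : Function.Injective (algebraMap A (FractionRing A)) :=
    IsFractionRing.injective A (FractionRing A)
  have ht' : algebraMap A (FractionRing A) t ≠ 0 := by
    simpa using fun h => ht (hinj (by simpa using h))
  rw [Submodule.mem_one]
  constructor
  · rintro ⟨d, hd⟩
    refine ⟨d, hinj ?_⟩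
    rw [div_mul_eq_mul_div, eq_div_iff ht'] at hd
    rw [map_mul, map_mul, ← hd]; ring
  · rintro ⟨d, hd⟩
    refine ⟨d, ?_⟩
    rw [div_mul_eq_mul_div, eq_div_iff ht', ← map_mul, ← map_mul, hd]; ring_nf

lemma dvd_of_dvd_pair {R : Type*} [CommRing R] [IsDomain R] {I : Ideal R} {a b : R}
    (heq : idealInv I = idealInv (Ideal.span {a, b})) {r t : R} (ht : t ≠ 0)
    (hta : t ∣ r * a) (htb : t ∣ r * b) {i : R} (hi : i ∈ I) : t ∣ r * i := by
  set K := FractionRing R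
  set x : K := algebraMap R K r / algebraMap R K t with hx
  have hxspan : x ∈ idealInv (Ideal.span ({a, b} : Set R)) := by
    rw [mem_idealInv_iff]
    intro j hj
    obtain ⟨c, d, hcd⟩ := Ideal.mem_span_pair.mp hj
    rw [div_mul_mem_one_iff ht, ← hcd]
    have : r * (c * a + d * b) = c * (r * a) + d * (r * b) := by ring
    rw [this]
    exact dvd_add (Dvd.dvd.mul_left hta c) (Dvd.dvd.mul_left htb d)
  rw [← heq, mem_idealInv_iff] at hxspan
  exact (div_mul_mem_one_iff ht).mp (hxspan i hi)

lemma mem_one_equiv {A L L' : Type*} [CommSemiring A] [Semiring L] [Semiring L']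
    [Algebra A L] [Algebra A L'] (e : L ≃ₐ[A] L') {x : L} :
    x ∈ (1 : Submodule A L) ↔ e x ∈ (1 : Submodule A L') := by
  simp only [Submodule.mem_one]
  constructor
  · rintro ⟨c, rfl⟩; exact ⟨c, (e.commutes c).symm⟩
  · rintro ⟨c, hc⟩; exact ⟨c, e.injective (by rw [e.commutes, hc])⟩

theorem stmt_16 {R : Type*} [CommRing R] [IsDomain R] (S : Submonoid R)
    (hS : (0 : R) ∉ S) (I : Ideal R) (hI : I ≠ ⊥) (h2v : TwoVGenerated I) :
    TwoVGenerated (I.map (algebraMap R (Localization S))) := by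
  obtain ⟨a, b, ha, hb, heq⟩ := h2v
  have hle : S ≤ nonZeroDivisors R := fun s hs =>
    mem_nonZeroDivisors_of_ne_zero (fun h => hS (h ▸ hs))
  set R' := Localization S with hR'
  haveI : IsDomain R' := IsLocalization.isDomain_localization hle
  set K := FractionRing R with hK
  set K' := FractionRing R' with hK'
  letI : Algebra R' K :=
    IsLocalization.localizationAlgebraOfSubmonoidLe R' K S (nonZeroDivisors R) hle
  haveI : IsScalarTower R R' K :=
    IsLocalization.localization_isScalarTower_of_submonoid_le R' K S (nonZeroDivisors R) hle
  haveI : IsFractionRing R' K :=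
    IsFractionRing.isFractionRing_of_isDomain_of_isLocalization (M := S) R' K
  let e : K' ≃ₐ[R'] K := IsLocalization.algEquiv (nonZeroDivisors R') K' K
  have hinj : Function.Injective (algebraMap R K) := IsFractionRing.injective R K
  have hnz : ∀ {u : R}, u ≠ 0 → algebraMap R K u ≠ 0 := fun {u} hu h =>
    hu (hinj (by simpa using h))
  refine ⟨algebraMap R R' a, algebraMap R R' b, Ideal.mem_map_of_mem _ ha,
    Ideal.mem_map_of_mem _ hb, ?_⟩
  have hspan_le : Ideal.span ({algebraMap R R' a, algebraMap R R' b} : Set R') ≤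
      I.map (algebraMap R R') := by
    rw [Ideal.span_le]
    rintro y hy
    simp only [Set.mem_insert_iff, Set.mem_singleton_iff] at hy
    rcases hy with rfl | rfl
    exacts [Ideal.mem_map_of_mem _ ha, Ideal.mem_map_of_mem _ hb]
  apply le_antisymm
  · intro x hx
    rw [mem_idealInv_iff] at hx ⊢
    intro j hj
    exact hx j (hspan_le hj)
  · intro x hx
    rw [mem_idealInv_iff] at hx ⊢
    have key : ∀ c : R', (x * algebraMap R' K' c ∈ (1 : Submodule R' K') ↔
        e x * algebraMap R' K c ∈ (1 : Submodule R' K)) := by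
      intro c
      rw [mem_one_equiv e, map_mul, e.commutes]
    set y := e x with hy
    obtain ⟨r, t, htR, hrt⟩ := IsFractionRing.div_surjective (A := R) y
    have ht : t ≠ 0 := nonZeroDivisors.ne_zero htR
    have ht0 : algebraMap R K t ≠ 0 := hnz ht
    have extract : ∀ c : R, x * algebraMap R' K' (algebraMap R R' c) ∈
        (1 : Submodule R' K') → ∃ s ∈ S, t ∣ r * c * s := by
      intro c hc
      rw [key, ← IsScalarTower.algebraMap_apply] at hc
      obtain ⟨w, hw⟩ := Submodule.mem_one.mp hc
      obtain ⟨⟨d, s⟩, hds⟩ := IsLocalization.surj S w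
      refine ⟨s, s.2, d, ?_⟩
      have hw' : algebraMap R' K w * algebraMap R K (s : R) = algebraMap R K d := by
        rw [IsScalarTower.algebraMap_apply R R' K, IsScalarTower.algebraMap_apply R R' K d,
          ← map_mul, hds]
      have hKeq : algebraMap R K r * algebraMap R K c * algebraMap R K (s : R) =
          algebraMap R K t * algebraMap R K d := by
        rw [← hw', hw, ← hrt]
        rw [div_mul_eq_mul_div, div_mul_eq_mul_div, mul_div_assoc', mul_comm (algebraMap R K t),
          mul_div_assoc, div_self ht0, mul_one]
      apply hinj
      rw [map_mul, map_mul, map_mul]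
      exact hKeq
    obtain ⟨s1, hs1, d1, hd1⟩ := extract a (hx _ (Ideal.subset_span (by simp)))
    obtain ⟨s2, hs2, d2, hd2⟩ := extract b (hx _ (Ideal.subset_span (by simp)))
    have hta : t ∣ (r * (s1 * s2)) * a := ⟨d1 * s2, by linear_combination s2 * hd1⟩
    have htb : t ∣ (r * (s1 * s2)) * b := ⟨d2 * s1, by linear_combination s1 * hd2⟩
    have hσ : s1 * s2 ∈ S := mul_mem hs1 hs2
    have hσ0 : algebraMap R K (s1 * s2) ≠ 0 := hnz (fun h => hS (h ▸ hσ))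
    let J : Ideal R' :=
      { carrier := {c : R' | x * algebraMap R' K' c ∈ (1 : Submodule R' K')}
        add_mem' := fun {p q} hp hq => by
          simp only [Set.mem_setOf_eq, map_add, mul_add] at *
          exact Submodule.add_mem _ hp hq
        zero_mem' := by simp [Submodule.zero_mem]
        smul_mem' := fun c p hp => by
          simp only [smul_eq_mul, Set.mem_setOf_eq, map_mul] at *
          have hcm : x * (algebraMap R' K' c * algebraMap R' K' p) =
              c • (x * algebraMap R' K' p) := by
            rw [Algebra.smul_def]; ring
          rw [hcm]
          exact Submodule.smul_mem _ c hp }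
    have hIJ : I.map (algebraMap R R') ≤ J := by
      rw [Ideal.map_le_iff_le_comap]
      intro i hi
      show x * algebraMap R' K' (algebraMap R R' i) ∈ (1 : Submodule R' K')
      rw [key, ← IsScalarTower.algebraMap_apply]
      obtain ⟨ei, hei⟩ := dvd_of_dvd_pair heq ht hta htb hi
      refine Submodule.mem_one.mpr ⟨IsLocalization.mk' R' ei ⟨s1 * s2, hσ⟩, ?_⟩
      have hspec := IsLocalization.mk'_spec R' ei (⟨s1 * s2, hσ⟩ : S)
      have hspecK := congrArg (algebraMap R' K) hspec
      rw [map_mul, ← IsScalarTower.algebraMap_apply, ← IsScalarTower.algebraMap_apply] at hspecK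
      -- hspecK : algR'K (mk') * algK (s1*s2) = algK ei
      rw [← hrt, eq_div_of_mul_eq hσ0 hspecK, div_mul_eq_mul_div,
        div_eq_div_iff hσ0 ht0, ← map_mul, ← map_mul, ← map_mul]
      apply congrArg
      linear_combination -hei
    intro j hj
    exact hIJ hj
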